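/- Let R = ℤ[q^{±1/2}] be the ring of Laurent polynomials over ℤ in the invertible variable q^{1/2}, and set q = (q^{1/2})². Let A = O_{q²}(SL₂) be the R-algebra presented by generators a, b, c, d subject to the relations ba = q²ab, ca = q²ac, db = q²bd, dc = q²cd, bc = cb, ad − q⁻²bc = 1, da − q²bc = 1. Let C ⊆ A be the R-submodule spanned by all commutators xy − yx with x, y ∈ A. Then (q² − 1)·(ab) ∈ C, while ab ∉ C. Equivalently, the image τ(ab) of ab in HH₀(O_{q²}(SL₂)) = A/C is a nonzero element annihilated by q² − 1, so the ℤ[q^{±1/2}]-module HH₀(O_{q²}(SL₂)) has nontrivial torsion. -/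

import Mathlib

open LaurentPolynomial

/-- The ground ring `ℤ[q^{±1/2}]`: Laurent polynomials over `ℤ` in the invertible
variable `q^{1/2}`, so that `q = T 2`, `q² = T 4`, `q⁻² = T (-4)`. -/
abbrev SkeinRing : Type := LaurentPolynomial ℤ

/-- Generators `a, b, c, d` of the free algebra, indexed by `Fin 4`. -/
noncomputable def sl2gen (i : Fin 4) : FreeAlgebra SkeinRing (Fin 4) :=
  FreeAlgebra.ι SkeinRing i

/-- The defining relations of `O_{q²}(SL₂)`:
`ba = q²ab`, `ca = q²ac`, `db = q²bd`, `dc = q²cd`, `bc = cb`,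
`ad − q⁻²bc = 1`, `da − q²bc = 1`, where `a,b,c,d` are the generators
indexed by `0,1,2,3` and `q² = T 4`, `q⁻² = T (-4)`. -/
inductive SL2Rel : FreeAlgebra SkeinRing (Fin 4) → FreeAlgebra SkeinRing (Fin 4) → Prop
  | ba : SL2Rel (sl2gen 1 * sl2gen 0) ((T 4 : SkeinRing) • (sl2gen 0 * sl2gen 1))
  | ca : SL2Rel (sl2gen 2 * sl2gen 0) ((T 4 : SkeinRing) • (sl2gen 0 * sl2gen 2))
  | db : SL2Rel (sl2gen 3 * sl2gen 1) ((T 4 : SkeinRing) • (sl2gen 1 * sl2gen 3))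
  | dc : SL2Rel (sl2gen 3 * sl2gen 2) ((T 4 : SkeinRing) • (sl2gen 2 * sl2gen 3))
  | bc : SL2Rel (sl2gen 1 * sl2gen 2) (sl2gen 2 * sl2gen 1)
  | ad : SL2Rel (sl2gen 0 * sl2gen 3 - (T (-4) : SkeinRing) • (sl2gen 1 * sl2gen 2)) 1
  | da : SL2Rel (sl2gen 3 * sl2gen 0 - (T 4 : SkeinRing) • (sl2gen 1 * sl2gen 2)) 1

/-- The quantized coordinate algebra `O_{q²}(SL₂)` over `ℤ[q^{±1/2}]`. -/
noncomputable def OqSL2 : Type := RingQuot SL2Rel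

noncomputable instance : Ring OqSL2 := by unfold OqSL2; infer_instance
noncomputable instance : Algebra SkeinRing OqSL2 := by unfold OqSL2; infer_instance

/-- The images of the generators `a, b, c, d` in `O_{q²}(SL₂)`. -/
noncomputable def oq (i : Fin 4) : OqSL2 :=
  RingQuot.mkAlgHom SkeinRing SL2Rel (sl2gen i)

/-- Augmentation `ℤ[q^{±1/2}] → ℤ` sending `q^{1/2} ↦ 1`. -/
noncomputable def eps : SkeinRing →ₐ[ℤ] ℤ :=
  AddMonoidAlgebra.lift ℤ ℤ ℤ 1

lemma eps_T (n : ℤ) : eps (T n) = 1 := by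
  rw [eps, T, AddMonoidAlgebra.lift_single]; simp

noncomputable instance intSkeinAlg : Algebra SkeinRing ℤ := eps.toRingHom.toAlgebra

lemma skein_smul_int (r : SkeinRing) (x : ℤ) : r • x = eps r * x := rfl

/-- Evaluation of the free algebra at `a=1, b=1, c=0, d=1`. -/
noncomputable def evalF : FreeAlgebra SkeinRing (Fin 4) →ₐ[SkeinRing] ℤ :=
  FreeAlgebra.lift SkeinRing ![1, 1, 0, 1]

lemma evalF_rel {x y : FreeAlgebra SkeinRing (Fin 4)} (h : SL2Rel x y) :
    evalF x = evalF y := by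
  induction h <;>
    simp [evalF, sl2gen, map_smul, skein_smul_int, eps_T, Algebra.smul_def,
      RingHom.algebraMap_toAlgebra]

noncomputable def Φ : OqSL2 →ₐ[SkeinRing] ℤ :=
  RingQuot.liftAlgHom SkeinRing ⟨evalF, fun _ _ h => evalF_rel h⟩

lemma Φ_oq (i : Fin 4) : Φ (oq i) = evalF (sl2gen i) :=
  RingQuot.liftAlgHom_mkAlgHom_apply _ _ _ _

theorem HH0_OqSL2_torsion
    (C : Submodule SkeinRing OqSL2)
    (hC : C = Submodule.span SkeinRing {z : OqSL2 | ∃ x y : OqSL2, z = x * y - y * x}) :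
    ((T 4 - 1 : SkeinRing) • (oq 0 * oq 1) ∈ C) ∧ (oq 0 * oq 1 ∉ C) := by
  constructor
  · have hrel := RingQuot.mkAlgHom_rel SkeinRing SL2Rel.ba
    rw [map_mul, map_smul, map_mul] at hrel
    have hrel' : oq 1 * oq 0 = (T 4 : SkeinRing) • (oq 0 * oq 1) := hrel
    have heq : (T 4 - 1 : SkeinRing) • (oq 0 * oq 1) = oq 1 * oq 0 - oq 0 * oq 1 := by
      rw [Algebra.smul_def, map_sub, map_one, sub_mul, one_mul, ← Algebra.smul_def, ← hrel']
    rw [heq, hC]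
    exact Submodule.subset_span ⟨oq 1, oq 0, rfl⟩
  · intro hmem
    have hker : C ≤ LinearMap.ker Φ.toLinearMap := by
      rw [hC]
      apply Submodule.span_le.mpr
      rintro z ⟨x, y, rfl⟩
      simp [LinearMap.mem_ker, mul_comm]
    have hz := hker hmem
    rw [LinearMap.mem_ker] at hz
    have h1 : Φ (oq 0 * oq 1) = 1 := by
      rw [map_mul, Φ_oq, Φ_oq]
      simp [evalF, sl2gen]
    simp [h1] at hz
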